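/- For the two uncoupled Kepler problems potential U(θ) = 1/cos θ + μ/sin θ on (0, π/2) with μ > 0, the point θ_c = arctan(μ^{1/3}) is a critical point of U, and ω² := 2U''(θ_c)/U(θ_c) = 6, independent of μ. -/

import Mathlib

open Real

/-- For two uncoupled Kepler problems, `θ_c = arctan(μ^{1/3})` is a critical point and
`ω² = 2U''(θ_c)/U(θ_c) = 6`, independent of `μ`. -/
theorem uncoupled_kepler
    (μ : ℝ) (hμ : 0 < μ)
    (U : ℝ → ℝ)
    (hU : ∀ θ ∈ Set.Ioo 0 (π / 2),
      U θ = 1 / Real.cos θ + μ / Real.sin θ)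
    (θc : ℝ) (hθc : θc = Real.arctan (μ ^ ((1 : ℝ) / 3))) :
    deriv U θc = 0 ∧
    2 * deriv (deriv U) θc / U θc = 6 := by
  set t : ℝ := μ ^ ((1 : ℝ) / 3) with ht_def
  have ht : 0 < t := Real.rpow_pos_of_pos hμ _
  have ht3 : t ^ 3 = μ := by
    rw [ht_def, ← Real.rpow_natCast (μ ^ ((1:ℝ)/3)) 3, ← Real.rpow_mul hμ.le]
    norm_num
  have hmem : θc ∈ Set.Ioo 0 (π / 2) := by
    rw [hθc]
    exact ⟨by simpa using Real.arctan_strictMono ht, Real.arctan_lt_pi_div_two t⟩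
  have hc : 0 < Real.cos θc := Real.cos_pos_of_mem_Ioo
    ⟨by linarith [hmem.1, pi_div_two_pos], hmem.2⟩
  have hs : 0 < Real.sin θc := Real.sin_pos_of_pos_of_lt_pi hmem.1
    (by linarith [hmem.2, pi_pos])
  have htan : Real.tan θc = t := by rw [hθc, Real.tan_arctan]
  have hsc : Real.sin θc = t * Real.cos θc := by
    rw [← htan, Real.tan_eq_sin_div_cos]; field_simp
  have hs3 : Real.sin θc ^ 3 = μ * Real.cos θc ^ 3 := by
    rw [hsc, ← ht3]; ring
  set f : ℝ → ℝ := fun θ => 1 / Real.cos θ + μ / Real.sin θ with hf_def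
  set g : ℝ → ℝ := fun θ =>
    Real.sin θ / Real.cos θ ^ 2 - μ * (Real.cos θ / Real.sin θ ^ 2) with hg_def
  have hderiv : ∀ θ ∈ Set.Ioo 0 (π / 2), HasDerivAt f (g θ) θ := by
    intro θ hθ
    have hcθ : 0 < Real.cos θ := Real.cos_pos_of_mem_Ioo
      ⟨by linarith [hθ.1, pi_div_two_pos], hθ.2⟩
    have hsθ : 0 < Real.sin θ := Real.sin_pos_of_pos_of_lt_pi hθ.1
      (by linarith [hθ.2, pi_pos])
    have h1 : HasDerivAt (fun x => 1 / Real.cos x)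
        (Real.sin θ / Real.cos θ ^ 2) θ := by
      have := (Real.hasDerivAt_cos θ).inv hcθ.ne'
      simp only [one_div]
      exact this.congr_deriv (by ring : - -Real.sin θ / Real.cos θ ^ 2 = Real.sin θ / Real.cos θ ^ 2)
    have h2 : HasDerivAt (fun x => μ / Real.sin x)
        (-(μ * (Real.cos θ / Real.sin θ ^ 2))) θ := by
      have := ((Real.hasDerivAt_sin θ).inv hsθ.ne').const_mul μ
      have h' : μ * -(Real.cos θ / Real.sin θ ^ 2)
          = -(μ * (Real.cos θ / Real.sin θ ^ 2)) := by ring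
      simpa [div_eq_mul_inv, neg_div, h'] using this
    exact (h1.add h2).congr_deriv
      (by show _ = Real.sin θ / Real.cos θ ^ 2 - μ * (Real.cos θ / Real.sin θ ^ 2); ring)
  have hnhds : Set.Ioo 0 (π / 2) ∈ nhds θc := isOpen_Ioo.mem_nhds hmem
  have hUf : U =ᶠ[nhds θc] f := Filter.eventuallyEq_of_mem hnhds hU
  have hfg : Set.EqOn (deriv f) g (Set.Ioo 0 (π / 2)) := fun θ hθ =>
    (hderiv θ hθ).deriv
  have hUg : deriv U =ᶠ[nhds θc] g :=
    (hUf.deriv).trans (Filter.eventuallyEq_of_mem hnhds hfg)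
  have hdU : deriv U θc = g θc := hUg.self_of_nhds
  have hgc : g θc = 0 := by
    rw [hg_def]
    field_simp
    nlinarith [hs3]
  -- second derivative
  have h1 : HasDerivAt (fun x => Real.sin x / Real.cos x ^ 2)
      ((Real.cos θc * Real.cos θc ^ 2 - Real.sin θc *
        (2 * Real.cos θc ^ 1 * (-Real.sin θc))) / (Real.cos θc ^ 2) ^ 2) θc :=
    (Real.hasDerivAt_sin θc).div ((Real.hasDerivAt_cos θc).pow 2)
      (by positivity)
  have h2 : HasDerivAt (fun x => Real.cos x / Real.sin x ^ 2)
      ((-Real.sin θc * Real.sin θc ^ 2 - Real.cos θc *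
        (2 * Real.sin θc ^ 1 * Real.cos θc)) / (Real.sin θc ^ 2) ^ 2) θc :=
    (Real.hasDerivAt_cos θc).div ((Real.hasDerivAt_sin θc).pow 2)
      (by positivity)
  have hG : HasDerivAt g
      ((Real.cos θc * Real.cos θc ^ 2 - Real.sin θc *
        (2 * Real.cos θc ^ 1 * (-Real.sin θc))) / (Real.cos θc ^ 2) ^ 2
      - μ * ((-Real.sin θc * Real.sin θc ^ 2 - Real.cos θc *
        (2 * Real.sin θc ^ 1 * Real.cos θc)) / (Real.sin θc ^ 2) ^ 2)) θc := by
    exact h1.sub (h2.const_mul μ)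
  have hddU : deriv (deriv U) θc = deriv g θc := hUg.deriv_eq
  have hgd : deriv g θc = _ := hG.deriv
  have hUval : U θc = 1 / Real.cos θc + μ / Real.sin θc := hU θc hmem
  constructor
  · rw [hdU, hgc]
  · rw [hddU, hgd, hUval]
    have hpyth := Real.sin_sq_add_cos_sq θc
    field_simp
    linear_combination (4 *
      (Real.sin θc ^ 2 - Real.cos θc ^ 2)) * hs3
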